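/- (Exchange property for I(θ)) Suppose s̲₁⋯s̲ₖ is a reduced S̲-expression for a twisted involution (i.e., ρ(e·s̲₁⋯s̲ₖ) = k), and suppose ρ(e·s̲₁⋯s̲ₖ·s̲) < k for some s ∈ S. Then e·s̲₁⋯s̲ₖ·s̲ = e·s̲₁⋯ŝ̲ᵢ⋯s̲ₖ for some i ∈ {1,…,k}, where the hat denotes omission. -/

import Mathlib

/-- `θ` maps simple reflections to simple reflections. -/
def PreservesSimples {B W : Type*} [Group W] {M : CoxeterMatrix B}
    (cs : CoxeterSystem M W) (θ : W ≃* W) : Prop :=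
  ∀ i : B, ∃ j : B, θ (cs.simple i) = cs.simple j

open Classical in
/-- The twisted action `w · s̲`. -/
noncomputable def twMul {B W : Type*} [Group W] {M : CoxeterMatrix B}
    (cs : CoxeterSystem M W) (θ : W ≃* W) (w : W) (i : B) : W :=
  if θ (cs.simple i) * w * cs.simple i = w then w * cs.simple i
  else θ (cs.simple i) * w * cs.simple i

/-- Action of a word of symbols. -/
noncomputable def twWord {B W : Type*} [Group W] {M : CoxeterMatrix B}
    (cs : CoxeterSystem M W) (θ : W ≃* W) (w : W) (l : List B) : W :=
  l.foldl (twMul cs θ) w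

/-- The rank `ρ(w)`: the minimal length of an `S̲`-expression for `w`. -/
noncomputable def twRho {B W : Type*} [Group W] {M : CoxeterMatrix B}
    (cs : CoxeterSystem M W) (θ : W ≃* W) (w : W) : ℕ :=
  sInf {k : ℕ | ∃ l : List B, l.length = k ∧ twWord cs θ 1 l = w}

/-! ### Part I: the sign/permutation representation and the strong exchange property -/

namespace StmtAux

open CoxeterSystem List

variable {B W : Type*} [Group W] {M : CoxeterMatrix B} (cs : CoxeterSystem M W)

local prefix:100 "s" => cs.simple
local prefix:100 "π" => cs.wordProd
local prefix:100 "ℓ" => cs.length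
local prefix:100 "ris" => cs.rightInvSeq

noncomputable local instance : DecidableEq W := Classical.decEq W

open Classical in
/-- The basic function underlying the sign representation. -/
noncomputable def sigmaFun (i : B) : W × ℤˣ → W × ℤˣ :=
  fun p => (s i * p.1 * s i, if p.1 = s i then -p.2 else p.2)

theorem simple_conj_simple (i : B) (x : W) :
    s i * (s i * x * s i) * s i = x := by
  calc s i * (s i * x * s i) * s i = (s i * s i) * x * (s i * s i) := by group
  _ = x := by rw [cs.simple_mul_simple_self]; group

theorem sigmaFun_involutive (i : B) : Function.Involutive (sigmaFun cs i) := by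
  intro p
  obtain ⟨x, ε⟩ := p
  unfold sigmaFun
  by_cases h : x = s i
  · subst h
    have h1 : s i * s i * s i = s i := by rw [cs.simple_mul_simple_self, one_mul]
    simp [h1]
  · have h2 : ¬ (s i * x * s i = s i) := by
      intro hc
      apply h
      have h3 : x = s i * (s i * x * s i) * s i := (simple_conj_simple cs i x).symm
      rw [hc] at h3
      rw [cs.simple_mul_simple_self, one_mul] at h3
      exact h3
    simp only [if_neg h, if_neg h2, simple_conj_simple]

/-- The sign permutation attached to a simple reflection. -/
noncomputable def sigma (i : B) : Equiv.Perm (W × ℤˣ) :=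
  (sigmaFun_involutive cs i).toPerm

theorem sigma_apply (i : B) (p : W × ℤˣ) : sigma cs i p = sigmaFun cs i p := rfl

theorem sigma_liftable : M.IsLiftable (sigma cs) := by
  classical
  intro i j
  rcases Nat.eq_zero_or_pos (M i j) with h0 | hpos
  · rw [h0, pow_zero]
  have hxx : s i * s i = 1 := cs.simple_mul_simple_self i
  have hyy : s j * s j = 1 := cs.simple_mul_simple_self j
  obtain ⟨a, ha⟩ : ∃ z : W, z = s i * s j := ⟨_, rfl⟩
  have ham : a ^ (M i j) = 1 := by rw [ha]; exact cs.simple_mul_simple_pow i j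
  have hji : s j * s i = a⁻¹ := by
    rw [ha, mul_inv_rev, cs.inv_simple, cs.inv_simple]
  have hya1 : s j * a = a⁻¹ * s j := by
    rw [ha, mul_inv_rev, cs.inv_simple, cs.inv_simple]
    group
  have hya : ∀ q : ℕ, s j * a ^ q = (a ^ q)⁻¹ * s j := by
    intro q
    induction q with
    | zero => simp
    | succ q ih =>
      rw [pow_succ, ← mul_assoc, ih, mul_assoc, hya1, ← mul_assoc, mul_inv_rev]
      rw [((Commute.refl a).pow_right q).inv_inv.eq]
  have hyxy : s j * s i * s j = a⁻¹ * s j := by rw [hji]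
  have hpowinv : ∀ p r : ℕ, (a ^ p)⁻¹ * (a ^ r)⁻¹ = (a ^ (p + r))⁻¹ := by
    intro p r
    rw [pow_add, mul_inv_rev]
    exact ((Commute.refl a).pow_pow p r).inv_inv.eq
  obtain ⟨flip, hflip⟩ : ∃ flip : W → ℕ → ℤˣ,
      flip = fun v r => if v = (a ^ r)⁻¹ * s j then -1 else 1 := ⟨_, rfl⟩
  have flipcond : ∀ (v : W) (r : ℕ) (c : Prop) [Decidable c],
      (c ↔ v = (a ^ r)⁻¹ * s j) → (if c then (-1 : ℤˣ) else 1) = flip v r := by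
    intro v r c _ hc
    rw [hflip]
    simp only
    by_cases h : c
    · rw [if_pos h, if_pos (hc.mp h)]
    · rw [if_neg h, if_neg (fun hh => h (hc.mpr hh))]
  have key : ∀ (q : ℕ) (v : W) (ε : ℤˣ), ((sigma cs i * sigma cs j) ^ q) (v, ε) =
      (a ^ q * v * (a ^ q)⁻¹, ε * ∏ r ∈ Finset.range (2 * q), flip v r) := by
    intro q
    induction q with
    | zero => intro v ε; simp
    | succ q ih =>
      intro v ε
      rw [pow_succ', Equiv.Perm.mul_apply, ih v ε]
      rw [Equiv.Perm.mul_apply, sigma_apply, sigma_apply]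
      unfold sigmaFun
      simp only
      have cond1 : (a ^ q * v * (a ^ q)⁻¹ = s j) ↔ (v = (a ^ (2 * q))⁻¹ * s j) := by
        constructor
        · intro hc
          have h4 : v = (a ^ q)⁻¹ * s j * a ^ q := by rw [← hc]; group
          rw [h4, mul_assoc, hya q, ← mul_assoc, hpowinv, two_mul]
        · intro hc
          rw [hc, two_mul, ← hpowinv]
          calc a ^ q * ((a ^ q)⁻¹ * (a ^ q)⁻¹ * s j) * (a ^ q)⁻¹
              = (a ^ q)⁻¹ * s j * (a ^ q)⁻¹ := by group
            _ = s j * a ^ q * (a ^ q)⁻¹ := by rw [hya q]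
            _ = s j := by group
      have cond2 : (s j * (a ^ q * v * (a ^ q)⁻¹) * s j = s i) ↔
          (v = (a ^ (2 * q + 1))⁻¹ * s j) := by
        have hz : ∀ z : W, (s j * z * s j = s i) ↔ (z = s j * s i * s j) := by
          intro z
          constructor
          · intro hc
            calc z = (s j * s j) * z * (s j * s j) := by rw [hyy]; group
            _ = s j * (s j * z * s j) * s j := by group
            _ = s j * s i * s j := by rw [hc]
          · intro hc
            rw [hc]
            calc s j * (s j * s i * s j) * s j = (s j * s j) * s i * (s j * s j) := by group
            _ = s i := by rw [hyy]; group
        rw [hz, hyxy]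
        constructor
        · intro hc
          have h4 : v = (a ^ q)⁻¹ * (a⁻¹ * s j) * a ^ q := by rw [← hc]; group
          rw [h4]
          rw [show (a ^ q)⁻¹ * (a⁻¹ * s j) * a ^ q = (a ^ q)⁻¹ * a⁻¹ * (s j * a ^ q) from by
            group]
          rw [hya q]
          rw [show (a ^ q)⁻¹ * a⁻¹ * ((a ^ q)⁻¹ * s j)
              = (a ^ q)⁻¹ * (a ^ 1)⁻¹ * (a ^ q)⁻¹ * s j from by rw [pow_one]; group]
          rw [hpowinv, hpowinv]
          have hexp : q + 1 + q = 2 * q + 1 := by omega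
          rw [hexp]
        · intro hc
          rw [hc]
          have hexp : 2 * q + 1 = q + 1 + q := by omega
          rw [hexp, ← hpowinv, ← hpowinv, pow_one]
          calc a ^ q * ((a ^ q)⁻¹ * a⁻¹ * (a ^ q)⁻¹ * s j) * (a ^ q)⁻¹
              = a⁻¹ * ((a ^ q)⁻¹ * s j * (a ^ q)⁻¹) := by group
            _ = a⁻¹ * (s j * a ^ q * (a ^ q)⁻¹) := by rw [hya q]
            _ = a⁻¹ * s j := by group
      have hpr : ∏ r ∈ Finset.range (2 * (q + 1)), flip v r =
          (∏ r ∈ Finset.range (2 * q), flip v r) * flip v (2 * q) * flip v (2 * q + 1) := by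
        have h2 : 2 * (q + 1) = 2 * q + 1 + 1 := by ring
        rw [h2, Finset.prod_range_succ, Finset.prod_range_succ]
      refine Prod.ext ?_ ?_
      · show s i * (s j * (a ^ q * v * (a ^ q)⁻¹) * s j) * s i
            = a ^ (q + 1) * v * (a ^ (q + 1))⁻¹
        calc s i * (s j * (a ^ q * v * (a ^ q)⁻¹) * s j) * s i
            = (s i * s j) * a ^ q * v * ((a ^ q)⁻¹ * (s j * s i)) := by group
          _ = a * a ^ q * v * ((a ^ q)⁻¹ * a⁻¹) := by rw [← ha, hji]
          _ = a ^ (q + 1) * v * (a ^ (q + 1))⁻¹ := by rw [pow_succ', mul_inv_rev]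
      · show (if s j * (a ^ q * v * (a ^ q)⁻¹) * s j = s i
            then -(if a ^ q * v * (a ^ q)⁻¹ = s j
              then -(ε * ∏ r ∈ Finset.range (2 * q), flip v r)
              else ε * ∏ r ∈ Finset.range (2 * q), flip v r)
            else (if a ^ q * v * (a ^ q)⁻¹ = s j
              then -(ε * ∏ r ∈ Finset.range (2 * q), flip v r)
              else ε * ∏ r ∈ Finset.range (2 * q), flip v r))
            = ε * ∏ r ∈ Finset.range (2 * (q + 1)), flip v r
        rw [hpr]
        rw [← flipcond v (2 * q) _ cond1, ← flipcond v (2 * q + 1) _ cond2]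
        by_cases h1 : a ^ q * v * (a ^ q)⁻¹ = s j <;>
          by_cases h2 : s j * (a ^ q * v * (a ^ q)⁻¹) * s j = s i <;>
          simp [h1, h2, mul_comm, mul_assoc, mul_left_comm]
  refine Equiv.ext fun p => ?_
  obtain ⟨v, ε⟩ := p
  rw [key (M i j) v ε, ham]
  have h1 : ((1 : Equiv.Perm (W × ℤˣ))) (v, ε) = (v, ε) := rfl
  rw [h1]
  refine Prod.ext ?_ ?_
  · show 1 * v * 1⁻¹ = v
    group
  · show ε * ∏ r ∈ Finset.range (2 * M i j), flip v r = ε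
    have hper : ∀ r : ℕ, flip v (M i j + r) = flip v r := by
      intro r
      rw [hflip]
      simp only [pow_add, ham, one_mul]
    rw [two_mul, Finset.prod_range_add]
    simp only [hper]
    rw [Int.units_mul_self, mul_one]

/-- The sign representation of the Coxeter group. -/
noncomputable def bigRep : W →* Equiv.Perm (W × ℤˣ) :=
  cs.lift ⟨sigma cs, sigma_liftable cs⟩

theorem bigRep_simple (i : B) : bigRep cs (s i) = sigma cs i :=
  cs.lift_apply_simple (sigma_liftable cs) i

theorem bigRep_wordProd (ω : List B) (v : W) (ε : ℤˣ) :
    bigRep cs (π ω) (v, ε) = ((π ω) * v * (π ω)⁻¹, ε * (-1) ^ (List.count v (ris ω))) := by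
  induction ω using List.reverseRecOn generalizing v ε with
  | nil => simp
  | append_singleton ω i ih =>
    rw [← List.concat_eq_append, cs.wordProd_concat, map_mul, Equiv.Perm.mul_apply,
      bigRep_simple, sigma_apply]
    unfold sigmaFun
    simp only
    rw [ih]
    have hcount : List.count v (ris (ω.concat i)) =
        (if v = s i then 1 else 0) + List.count (s i * v * s i) (ris ω) := by
      rw [cs.rightInvSeq_concat]
      rw [List.concat_eq_append, List.count_append]
      have h1 : List.count v [s i] = if v = s i then 1 else 0 := by
        simp [List.count_singleton]
        by_cases h : v = s i
        · simp [h]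
        · simp [h]
          intro hh
          exact absurd hh.symm h
      have h2 : List.count v (List.map (⇑(MulAut.conj (s i))) (ris ω)) =
          List.count (s i * v * s i) (ris ω) := by
        have hv : v = (MulAut.conj (s i)) (s i * v * s i) := by
          simp [MulAut.conj_apply, cs.inv_simple]
          calc v = (s i * s i) * v * (s i * s i) := by rw [cs.simple_mul_simple_self]; group
          _ = s i * (s i * v * s i) * s i := by group
        rw [hv]
        rw [List.count_map_of_injective _ _ (MulAut.conj (s i)).injective]
        congr 1
        rw [← hv]
      rw [h1, h2, Nat.add_comm]
    rw [Prod.mk.injEq]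
    constructor
    · rw [mul_inv_rev, cs.inv_simple]
      group
    · rw [hcount, pow_add]
      by_cases h : v = s i
      · rw [if_pos h, if_pos h, pow_one, neg_mul, neg_one_mul, mul_neg]
      · rw [if_neg h, if_neg h, pow_zero, one_mul]

theorem units_parity_helper (m n : ℕ) (h : ((-1 : ℤˣ)) ^ m = (-1) ^ n) :
    (Odd m ↔ Odd n) := by
  rcases Nat.even_or_odd m with hm | hm <;> rcases Nat.even_or_odd n with hn | hn
  · simp [Nat.not_odd_iff_even.mpr hm, Nat.not_odd_iff_even.mpr hn]
  · rw [hm.neg_one_pow, hn.neg_one_pow] at h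
    exact absurd h (by decide)
  · rw [hm.neg_one_pow, hn.neg_one_pow] at h
    exact absurd h (by decide)
  · simp [hm, hn]

theorem count_ris_parity {ω ω' : List B} (h : π ω = π ω') (t : W) :
    Odd (List.count t (ris ω)) ↔ Odd (List.count t (ris ω')) := by
  have h1 := bigRep_wordProd cs ω t 1
  have h2 := bigRep_wordProd cs ω' t 1
  rw [h] at h1
  rw [h1] at h2
  have := congrArg Prod.snd h2
  simp only [one_mul] at this
  exact units_parity_helper _ _ this

theorem bigRep_fst (g v : W) (ε : ℤˣ) : (bigRep cs g (v, ε)).1 = g * v * g⁻¹ := by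
  obtain ⟨ω, rfl⟩ := cs.wordProd_surjective g
  rw [bigRep_wordProd]

theorem bigRep_snd_factor (g v : W) (ε : ℤˣ) :
    (bigRep cs g (v, ε)).2 = ε * (bigRep cs g (v, 1)).2 := by
  obtain ⟨ω, rfl⟩ := cs.wordProd_surjective g
  rw [bigRep_wordProd, bigRep_wordProd]
  simp

theorem bigRep_reflection (t : W) (ht : cs.IsReflection t) :
    bigRep cs t (t, 1) = (t, -1) := by
  obtain ⟨w, i, rfl⟩ := ht
  set t := w * s i * w⁻¹ with hht
  set δ := (bigRep cs w⁻¹ (t, 1)).2 with hδ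
  have h1 : bigRep cs w⁻¹ (t, 1) = (s i, δ) := by
    refine Prod.ext ?_ rfl
    rw [bigRep_fst]
    show w⁻¹ * (w * s i * w⁻¹) * w⁻¹⁻¹ = s i
    group
  have h2 : bigRep cs (s i) (s i, δ) = (s i, -δ) := by
    rw [bigRep_simple, sigma_apply]
    unfold sigmaFun
    rw [Prod.mk.injEq]
    constructor
    · show s i * s i * s i = s i
      rw [cs.simple_mul_simple_self, one_mul]
    · show (if s i = s i then -δ else δ) = -δ
      rw [if_pos rfl]
  have h3 : bigRep cs w (s i, δ) = (t, 1) := by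
    have : bigRep cs w (bigRep cs w⁻¹ (t, 1)) = (t, 1) := by
      rw [← Equiv.Perm.mul_apply, ← map_mul, mul_inv_cancel, map_one, Equiv.Perm.one_apply]
    rw [h1] at this
    exact this
  have hrep : bigRep cs t = bigRep cs w * bigRep cs (s i) * bigRep cs w⁻¹ := by
    rw [hht, map_mul, map_mul]
  rw [hrep, Equiv.Perm.mul_apply, Equiv.Perm.mul_apply, h1, h2]
  refine Prod.ext ?_ ?_
  · rw [bigRep_fst]
  · show (bigRep cs w (s i, -δ)).2 = -1
    rw [bigRep_snd_factor]
    have h4 : δ * (bigRep cs w (s i, 1)).2 = 1 := by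
      have := congrArg Prod.snd h3
      simp only at this
      rw [bigRep_snd_factor] at this
      exact this
    calc -δ * (bigRep cs w (s i, 1)).2 = -(δ * (bigRep cs w (s i, 1)).2) := by
          rw [neg_mul]
    _ = -1 := by rw [h4]

theorem count_map_conj (g x : W) (L : List W) :
    List.count x (L.map (fun r => g⁻¹ * r * g)) = List.count (g * x * g⁻¹) L := by
  induction L with
  | nil => simp
  | cons r L ih =>
    simp only [List.map_cons, List.count_cons, ih]
    congr 1
    have hiff : (g⁻¹ * r * g = x) ↔ (r = g * x * g⁻¹) := by
      constructor
      · intro h; rw [← h]; group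
      · intro h; rw [h]; group
    by_cases h : g⁻¹ * r * g = x
    · rw [if_pos (by exact beq_iff_eq.mpr h), if_pos (beq_iff_eq.mpr (hiff.mp h))]
    · rw [if_neg (by simpa using h), if_neg (by simpa using (fun hh => h (hiff.mpr hh)))]

theorem ris_append (α β : List B) :
    ris (α ++ β) = (ris α).map (fun r => (π β)⁻¹ * r * (π β)) ++ ris β := by
  induction α with
  | nil => simp
  | cons i γ ih =>
    show ((π (γ ++ β))⁻¹ * s i * π (γ ++ β)) :: ris (γ ++ β) = _
    rw [ih]
    show _ = ((π β)⁻¹ * ((π γ)⁻¹ * s i * π γ) * (π β)) :: ((ris γ).map _ ++ ris β)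
    rw [cs.wordProd_append, mul_inv_rev]
    group

theorem count_ris_odd_of_reflection {t : W} (ht : cs.IsReflection t) {ω : List B}
    (hω : π ω = t) : Odd (List.count t (ris ω)) := by
  have h1 := bigRep_wordProd cs ω t 1
  rw [hω, bigRep_reflection cs t ht] at h1
  have := congrArg Prod.snd h1
  simp only [one_mul] at this
  rcases Nat.even_or_odd (List.count t (ris ω)) with he | ho
  · rw [he.neg_one_pow] at this
    exact absurd this (by decide)
  · exact ho

/-- **Strong exchange property**, membership form. -/
theorem strong_exchange_mem (ω : List B) {t : W} (ht : cs.IsReflection t)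
    (hlt : ℓ (π ω * t) < ℓ (π ω)) : t ∈ ris ω := by
  obtain ⟨ω₁, hω₁len, hω₁⟩ := cs.exists_reduced_word (π ω * t)
  obtain ⟨w, i, hti⟩ := id ht
  obtain ⟨ωw, hωw⟩ := cs.wordProd_surjective w
  have hpal : π (ωw ++ [i] ++ ωw.reverse) = t := by
    rw [cs.wordProd_append, cs.wordProd_append, cs.wordProd_reverse, cs.wordProd_singleton,
      hωw, hti]
  set pal := ωw ++ [i] ++ ωw.reverse with hpaldef
  have hΩ : π (ω₁ ++ pal) = π ω := by
    rw [cs.wordProd_append, hpal, ← hω₁, mul_assoc, ht.mul_self, mul_one]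
  have hcnt : List.count t (ris (ω₁ ++ pal)) =
      List.count t (ris ω₁) + List.count t (ris pal) := by
    rw [ris_append, List.count_append]
    congr 1
    calc List.count t ((ris ω₁).map (fun r => (π pal)⁻¹ * r * (π pal)))
        = List.count ((π pal) * t * (π pal)⁻¹) (ris ω₁) := count_map_conj _ _ _
      _ = List.count t (ris ω₁) := by
          congr 1
          rw [hpal, ht.inv]
          calc t * t * t = 1 * t := by rw [ht.mul_self]
          _ = t := by rw [one_mul]
  have hc1 : List.count t (ris ω₁) = 0 := by
    rw [List.count_eq_zero]
    intro hmem
    have hred₁ : cs.IsReduced ω₁ := by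
      exact hω₁len
    have := cs.isRightInversion_of_mem_rightInvSeq hred₁ hmem
    unfold CoxeterSystem.IsRightInversion at this
    rw [← hω₁] at this
    have h2 := this.2
    rw [mul_assoc, ht.mul_self, mul_one] at h2
    omega
  have hodd : Odd (List.count t (ris (ω₁ ++ pal))) := by
    rw [hcnt, hc1, Nat.zero_add]
    exact count_ris_odd_of_reflection cs ht hpal
  have hoddω : Odd (List.count t (ris ω)) := (count_ris_parity cs hΩ t).mp hodd
  rw [← List.count_pos_iff]
  exact hoddω.pos

/-- **Strong exchange property.** -/
theorem strong_exchange {ω : List B} {t : W} (ht : cs.IsReflection t)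
    (hlt : ℓ (π ω * t) < ℓ (π ω)) : ∃ j < ω.length, π ω * t = π (ω.eraseIdx j) := by
  have hmem := strong_exchange_mem cs ω ht hlt
  obtain ⟨j, hj, hjt⟩ := List.mem_iff_getElem.mp hmem
  rw [cs.length_rightInvSeq] at hj
  refine ⟨j, hj, ?_⟩
  have hget : (ris ω).getD j 1 = t := by
    rw [List.getD_eq_getElem _ _ (by rw [cs.length_rightInvSeq]; exact hj)]
    exact hjt
  rw [← hget]
  exact cs.wordProd_mul_getD_rightInvSeq ω j

/-- **Strong exchange property**, left version. -/
theorem left_strong_exchange {ω : List B} {t : W} (ht : cs.IsReflection t)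
    (hlt : ℓ (t * π ω) < ℓ (π ω)) : ∃ j < ω.length, t * π ω = π (ω.eraseIdx j) := by
  have hlt' : ℓ (π ω.reverse * t) < ℓ (π ω.reverse) := by
    rw [cs.wordProd_reverse]
    have h1 : (π ω)⁻¹ * t = (t * π ω)⁻¹ := by
      rw [mul_inv_rev, ht.inv]
    rw [h1, cs.length_inv, cs.length_inv]
    exact hlt
  have hmem := strong_exchange_mem cs ω.reverse ht hlt'
  rw [cs.rightInvSeq_reverse, List.mem_reverse] at hmem
  obtain ⟨j, hj, hjt⟩ := List.mem_iff_getElem.mp hmem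
  rw [cs.length_leftInvSeq] at hj
  refine ⟨j, hj, ?_⟩
  have hget : (cs.leftInvSeq ω).getD j 1 = t := by
    rw [List.getD_eq_getElem _ _ (by rw [cs.length_leftInvSeq]; exact hj)]
    exact hjt
  rw [← hget]
  exact cs.getD_leftInvSeq_mul_wordProd ω j

/-! ### Part II: Bruhat order and the lifting property -/

/-- One step in the Bruhat order. -/
def bstep (x y : W) : Prop := ∃ t, cs.IsReflection t ∧ y = x * t ∧ ℓ x < ℓ y

/-- The Bruhat order. -/
def ble (x y : W) : Prop := Relation.ReflTransGen (bstep cs) x y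

theorem ble_refl (x : W) : ble cs x x := Relation.ReflTransGen.refl

theorem ble_trans {x y z : W} (h1 : ble cs x y) (h2 : ble cs y z) : ble cs x z :=
  Relation.ReflTransGen.trans h1 h2

theorem length_le_of_ble {x y : W} (h : ble cs x y) : ℓ x ≤ ℓ y := by
  induction h with
  | refl => exact le_refl _
  | tail _ hstep ih =>
    obtain ⟨t, _, _, hlen⟩ := hstep
    omega

theorem ble_of_mul_reflection {x : W} {t : W} (ht : cs.IsReflection t)
    (h : ℓ (x * t) < ℓ x) : ble cs (x * t) x := by
  have : x = (x * t) * t := by rw [mul_assoc, ht.mul_self, mul_one]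
  refine Relation.ReflTransGen.single ⟨t, ht, this, ?_⟩
  omega

theorem ble_of_mul_reflection' {x : W} {t : W} (ht : cs.IsReflection t)
    (h : ℓ x < ℓ (x * t)) : ble cs x (x * t) :=
  Relation.ReflTransGen.single ⟨t, ht, rfl, h⟩

theorem ble_of_lmul_reflection {x : W} {t : W} (ht : cs.IsReflection t)
    (h : ℓ (t * x) < ℓ x) : ble cs (t * x) x := by
  have h1 : cs.IsReflection (x⁻¹ * t * x) := by
    have := ht.conj x⁻¹
    rwa [inv_inv] at this
  have h2 : t * x = x * (x⁻¹ * t * x) := by group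
  rw [h2] at h ⊢
  exact ble_of_mul_reflection cs h1 h

theorem ble_inv {x y : W} (h : ble cs x y) : ble cs x⁻¹ y⁻¹ := by
  induction h with
  | refl => exact ble_refl cs _
  | tail _ hstep ih =>
    rename_i b c _
    obtain ⟨t, ht, hc, hlen⟩ := hstep
    refine ble_trans cs ih (Relation.ReflTransGen.single ?_)
    refine ⟨b * t * b⁻¹, ht.conj b, ?_, ?_⟩
    · rw [hc, mul_inv_rev, ht.inv]
      group
    · have heq : b⁻¹ * (b * t * b⁻¹) = c⁻¹ := by
        rw [hc, mul_inv_rev, ht.inv]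
        group
      rw [cs.length_inv, cs.length_inv]
      exact hlen

/-- A reduced word for `w` ending in the letter `i`, when `i` is a right descent. -/
theorem exists_reduced_word_concat {w : W} {i : B} (h : ℓ (w * s i) < ℓ w) :
    ∃ ω' : List B, cs.IsReduced (ω'.concat i) ∧ w = π (ω'.concat i) ∧
      ω'.length = ℓ (w * s i) ∧ π ω' = w * s i := by
  obtain ⟨ω', hlen', heq⟩ := cs.exists_reduced_word (w * s i)
  have hlen : ω'.length = ℓ (w * s i) := by rw [heq]; exact hlen'.symm
  have hws : ℓ (w * s i) + 1 = ℓ w := by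
    rcases cs.length_mul_simple w i with h1 | h1
    · omega
    · omega
  refine ⟨ω', ?_, ?_, hlen, heq.symm⟩
  · unfold CoxeterSystem.IsReduced
    rw [cs.wordProd_concat, ← heq, mul_assoc, cs.simple_mul_simple_self, mul_one]
    rw [List.length_concat, hlen]
    omega
  · rw [cs.wordProd_concat, ← heq, mul_assoc, cs.simple_mul_simple_self, mul_one]

theorem zdown_zup (n : ℕ) :
    (∀ w v : W, ℓ w = n → ble cs v w → ∀ i : B, ℓ (w * s i) < ℓ w →
      ble cs (v * s i) w ∧ (ble cs v (w * s i) ∨ ble cs (v * s i) (w * s i))) ∧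
    (∀ w v : W, ℓ w = n → ble cs v w → ∀ i : B, ℓ v < ℓ (v * s i) → ℓ w < ℓ (w * s i) →
      ble cs (v * s i) (w * s i)) := by
  induction n using Nat.strong_induction_on with
  | _ n IH =>
  constructor
  · -- Zdown
    intro w v hn hvw i hdesc
    rcases Relation.ReflTransGen.cases_tail hvw with heq | ⟨x, hvx, hxw⟩
    · subst heq
      refine ⟨ble_of_mul_reflection cs (cs.isReflection_simple i) hdesc, Or.inr (ble_refl cs _)⟩
    · obtain ⟨t, ht, hweq, hlenx⟩ := hxw
      have hxwt : x = w * t := by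
        rw [hweq, mul_assoc, ht.mul_self, mul_one]
      have hxle : ble cs x w := by
        rw [hxwt]
        exact ble_of_mul_reflection cs ht (by rw [← hxwt]; omega)
      have hws_len : ℓ (w * s i) + 1 = ℓ w := by
        rcases cs.length_mul_simple w i with h1 | h1 <;> omega
      rcases Nat.lt_or_ge (ℓ (x * s i)) (ℓ x) with hxs | hxs
      · -- Case A
        obtain ⟨hA1, hA2⟩ := (IH (ℓ x) (by omega)).1 x v rfl hvx i hxs
        have hxs_le : ble cs (x * s i) (w * s i) := by
          have hrefl : cs.IsReflection (s i * t * s i) := by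
            have := ht.conj (s i)
            rwa [cs.inv_simple] at this
          have heq2 : x * s i = (w * s i) * (s i * t * s i) := by
            rw [hxwt]
            calc w * t * s i = w * (s i * s i) * t * s i := by
                  rw [cs.simple_mul_simple_self]; group
            _ = w * s i * (s i * t * s i) := by group
          have hlt : ℓ (x * s i) < ℓ (w * s i) := by omega
          rw [heq2] at hlt ⊢
          exact ble_of_mul_reflection cs hrefl hlt
        refine ⟨ble_trans cs hA1 hxle, ?_⟩
        rcases hA2 with h2 | h2
        · exact Or.inl (ble_trans cs h2 hxs_le)
        · exact Or.inr (ble_trans cs h2 hxs_le)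
      · -- Case B
        have hxs' : ℓ x < ℓ (x * s i) := by
          rcases Nat.lt_or_ge (ℓ x) (ℓ (x * s i)) with h1 | h1
          · exact h1
          · exfalso
            have := cs.length_mul_simple_ne x i
            omega
        obtain ⟨ω', hred, hwword, hω'len, hω'prod⟩ := exists_reduced_word_concat cs hdesc
        have hxlt : ℓ (π (ω'.concat i) * t) < ℓ (π (ω'.concat i)) := by
          rw [← hwword, ← hxwt]
          omega
        obtain ⟨j, hj, hjx⟩ := strong_exchange cs ht hxlt
        rw [← hwword, ← hxwt] at hjx
        rw [List.length_concat] at hj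
        rcases Nat.lt_or_ge j ω'.length with hjlt | hjge
        · -- deletion inside ω' : x = y * s i
          have herase : (ω'.concat i).eraseIdx j = (ω'.eraseIdx j).concat i := by
            rw [List.concat_eq_append, List.concat_eq_append,
              List.eraseIdx_append_of_lt_length hjlt]
          rw [herase, cs.wordProd_concat] at hjx
          set y := π (ω'.eraseIdx j) with hy
          have hylen : ℓ y ≤ n - 2 := by
            have h1 : ℓ y ≤ (ω'.eraseIdx j).length := cs.length_wordProd_le _
            have h2 : (ω'.eraseIdx j).length + 1 = ω'.length :=
              List.length_eraseIdx_add_one hjlt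
            omega
          have hxy : x = y * s i := hjx
          have hxsy : x * s i = y := by
            rw [hxy, mul_assoc, cs.simple_mul_simple_self, mul_one]
          have hy_le_ws : ble cs y (w * s i) := by
            have hmem : (ris ω').getD j 1 ∈ ris ω' := by
              have hjlen : j < (ris ω').length := by
                rw [cs.length_rightInvSeq]; exact hjlt
              rw [List.getD_eq_getElem _ _ hjlen]
              exact List.getElem_mem _
            have htrefl : cs.IsReflection ((ris ω').getD j 1) :=
              cs.isReflection_of_mem_rightInvSeq ω' hmem
            have heqy : y = (w * s i) * (ris ω').getD j 1 := by
              rw [hy, ← cs.wordProd_mul_getD_rightInvSeq, hω'prod]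
            have hlt : ℓ y < ℓ (w * s i) := by omega
            rw [heqy] at hlt ⊢
            exact ble_of_mul_reflection cs htrefl hlt
          have hws_le_w : ble cs (w * s i) w :=
            ble_of_mul_reflection cs (cs.isReflection_simple i) hdesc
          constructor
          · rcases Nat.lt_or_ge (ℓ (v * s i)) (ℓ v) with hvs | hvs
            · have : ble cs (v * s i) v := ble_of_mul_reflection cs
                (cs.isReflection_simple i) hvs
              exact ble_trans cs this (ble_trans cs hvx hxle)
            · have hvs' : ℓ v < ℓ (v * s i) := by
                have := cs.length_mul_simple_ne v i
                omega
              have := (IH (ℓ x) (by omega)).2 x v rfl hvx i hvs' hxs'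
              rw [hxsy] at this
              exact ble_trans cs this (ble_trans cs hy_le_ws hws_le_w)
          · rcases Nat.lt_or_ge (ℓ (v * s i)) (ℓ v) with hvs | hvs
            · left
              have hvs_le_x : ble cs (v * s i) x := by
                refine ble_trans cs ?_ hvx
                exact ble_of_mul_reflection cs (cs.isReflection_simple i) hvs
              have hvss : ℓ (v * s i) < ℓ ((v * s i) * s i) := by
                rw [mul_assoc, cs.simple_mul_simple_self, mul_one]
                exact hvs
              have := (IH (ℓ x) (by omega)).2 x (v * s i) rfl hvs_le_x i hvss hxs'
              rw [hxsy, mul_assoc, cs.simple_mul_simple_self, mul_one] at this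
              exact ble_trans cs this hy_le_ws
            · right
              have hvs' : ℓ v < ℓ (v * s i) := by
                have := cs.length_mul_simple_ne v i
                omega
              have := (IH (ℓ x) (by omega)).2 x v rfl hvx i hvs' hxs'
              rw [hxsy] at this
              exact ble_trans cs this hy_le_ws
        · -- deletion of the last letter : x = w * s i
          have hj_eq : j = ω'.length := by omega
          have herase : (ω'.concat i).eraseIdx j = ω' := by
            rw [hj_eq, List.concat_eq_append, List.eraseIdx_append_of_length_le (le_refl _)]
            simp
          rw [herase, hω'prod] at hjx
          -- hjx : x = w * s i
          constructor
          · rcases Nat.lt_or_ge (ℓ (v * s i)) (ℓ v) with hvs | hvs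
            · have : ble cs (v * s i) v := ble_of_mul_reflection cs
                (cs.isReflection_simple i) hvs
              exact ble_trans cs this (ble_trans cs hvx hxle)
            · have hvs' : ℓ v < ℓ (v * s i) := by
                have := cs.length_mul_simple_ne v i
                omega
              have hxsi : ℓ x < ℓ (x * s i) := hxs'
              have := (IH (ℓ x) (by omega)).2 x v rfl hvx i hvs' hxsi
              have hxsw : x * s i = w := by
                rw [hjx, mul_assoc, cs.simple_mul_simple_self, mul_one]
              rwa [hxsw] at this
          · left
            rw [← hjx]
            exact hvx
  · -- Zup
    intro w v hn hvw i hvs hws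
    rcases Relation.ReflTransGen.cases_tail hvw with heq | ⟨x, hvx, hxw⟩
    · subst heq
      exact ble_refl cs _
    · obtain ⟨t, ht, hweq, hlenx⟩ := hxw
      have hxwt : x = w * t := by
        rw [hweq, mul_assoc, ht.mul_self, mul_one]
      have hxle : ble cs x w := by
        rw [hxwt]
        exact ble_of_mul_reflection cs ht (by rw [← hxwt]; omega)
      have hw_le_ws : ble cs w (w * s i) :=
        ble_of_mul_reflection' cs (cs.isReflection_simple i) hws
      rcases Nat.lt_or_ge (ℓ (x * s i)) (ℓ x) with hxs | hxs
      · obtain ⟨hA1, _⟩ := (IH (ℓ x) (by omega)).1 x v rfl hvx i hxs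
        exact ble_trans cs hA1 (ble_trans cs hxle hw_le_ws)
      · have hxs' : ℓ x < ℓ (x * s i) := by
          have := cs.length_mul_simple_ne x i
          omega
        have hvsxs := (IH (ℓ x) (by omega)).2 x v rfl hvx i hvs hxs'
        have hxs_le : ble cs (x * s i) (w * s i) := by
          have hrefl : cs.IsReflection (s i * t * s i) := by
            have := ht.conj (s i)
            rwa [cs.inv_simple] at this
          have heq2 : x * s i = (w * s i) * (s i * t * s i) := by
            rw [hxwt]
            calc w * t * s i = w * (s i * s i) * t * s i := by
                  rw [cs.simple_mul_simple_self]; group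
            _ = w * s i * (s i * t * s i) := by group
          have hxs1 : ℓ (x * s i) ≤ ℓ x + 1 := by
            rcases cs.length_mul_simple x i with h1 | h1 <;> omega
          have hws1 : ℓ (w * s i) = ℓ w + 1 := by
            rcases cs.length_mul_simple w i with h1 | h1 <;> omega
          have hlt : ℓ (x * s i) < ℓ (w * s i) := by omega
          rw [heq2] at hlt ⊢
          exact ble_of_mul_reflection cs hrefl hlt
        exact ble_trans cs hvsxs hxs_le

/-- The right lifting property of the Bruhat order. -/
theorem lift_right {v w : W} (hvw : ble cs v w) {i : B} (hdesc : ℓ (w * s i) < ℓ w) :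
    ble cs v (w * s i) ∨ (ℓ (v * s i) < ℓ v ∧ ble cs (v * s i) (w * s i)) := by
  obtain ⟨h1, h2⟩ := (zdown_zup cs (ℓ w)).1 w v rfl hvw i hdesc
  rcases h2 with h2 | h2
  · exact Or.inl h2
  · rcases Nat.lt_or_ge (ℓ (v * s i)) (ℓ v) with hvs | hvs
    · exact Or.inr ⟨hvs, h2⟩
    · left
      have hvs' : ℓ v < ℓ (v * s i) := by
        have := cs.length_mul_simple_ne v i
        omega
      exact ble_trans cs (ble_of_mul_reflection' cs (cs.isReflection_simple i) hvs') h2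

/-- The left lifting property of the Bruhat order. -/
theorem lift_left {v w : W} (hvw : ble cs v w) {i : B} (hdesc : ℓ (s i * w) < ℓ w) :
    ble cs v (s i * w) ∨ (ℓ (s i * v) < ℓ v ∧ ble cs (s i * v) (s i * w)) := by
  have hinv : ble cs v⁻¹ w⁻¹ := ble_inv cs hvw
  have hdesc' : ℓ (w⁻¹ * s i) < ℓ w⁻¹ := by
    have h1 : w⁻¹ * s i = (s i * w)⁻¹ := by
      rw [mul_inv_rev, cs.inv_simple]
    rw [h1, cs.length_inv, cs.length_inv]
    exact hdesc
  rcases lift_right cs hinv hdesc' with h | ⟨h1, h2⟩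
  · left
    have h3 : w⁻¹ * s i = (s i * w)⁻¹ := by rw [mul_inv_rev, cs.inv_simple]
    rw [h3] at h
    have := ble_inv cs h
    rwa [inv_inv, inv_inv] at this
  · right
    have h3 : v⁻¹ * s i = (s i * v)⁻¹ := by rw [mul_inv_rev, cs.inv_simple]
    have h4 : w⁻¹ * s i = (s i * w)⁻¹ := by rw [mul_inv_rev, cs.inv_simple]
    rw [h3] at h1 h2
    rw [h4] at h2
    constructor
    · rw [cs.length_inv] at h1
      rwa [cs.length_inv] at h1
    · have := ble_inv cs h2
      rwa [inv_inv, inv_inv] at this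

/-! ### Part III: twisted involutions -/

section Twisted

variable (θ : W ≃* W)

theorem theta_wordProd (hS : PreservesSimples cs θ) :
    ∃ f : B → B, (∀ i, θ (s i) = s (f i)) ∧ ∀ ω : List B, θ (π ω) = π (ω.map f) := by
  choose f hf using hS
  refine ⟨f, hf, ?_⟩
  intro ω
  induction ω with
  | nil => simp
  | cons a l ih =>
    rw [cs.wordProd_cons, map_mul, ih, List.map_cons, cs.wordProd_cons, hf]

theorem theta_length_le (hS : PreservesSimples cs θ) (w : W) : ℓ (θ w) ≤ ℓ w := by
  obtain ⟨f, _, hfw⟩ := theta_wordProd cs θ hS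
  obtain ⟨ω, hlen', heq⟩ := cs.exists_reduced_word w
  have hlen : ω.length = ℓ w := by rw [heq]; exact hlen'.symm
  have h1 : θ w = π (ω.map f) := by rw [heq, hfw]
  rw [h1]
  calc ℓ (π (ω.map f)) ≤ (ω.map f).length := cs.length_wordProd_le _
  _ = ω.length := by rw [List.length_map]
  _ = ℓ w := hlen

theorem theta_length (hinv : ∀ w : W, θ (θ w) = w) (hS : PreservesSimples cs θ) (w : W) :
    ℓ (θ w) = ℓ w := by
  refine le_antisymm (theta_length_le cs θ hS w) ?_
  have := theta_length_le cs θ hS (θ w)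
  rwa [hinv] at this

theorem theta_simple_sq (i : B) : θ (s i) * θ (s i) = 1 := by
  rw [← map_mul, cs.simple_mul_simple_self, map_one]

theorem theta_simple_inv (i : B) : (θ (s i))⁻¹ = θ (s i) := by
  rw [← map_inv, cs.inv_simple]

theorem simple_ne_one (i : B) : s i ≠ (1 : W) := by
  intro h
  have h1 := cs.length_simple i
  rw [h, cs.length_one] at h1
  omega

theorem twMul_ti {w : W} (hinv : ∀ w : W, θ (θ w) = w) (hw : θ w = w⁻¹) (i : B) :
    θ (twMul cs θ w i) = (twMul cs θ w i)⁻¹ := by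
  unfold twMul
  split_ifs with h
  · have hth : θ (s i) = w * s i * w⁻¹ := by
      have : θ (s i) * w * s i * (s i)⁻¹ * w⁻¹ = w * (s i)⁻¹ * w⁻¹ := by
        rw [h]
      rw [cs.inv_simple] at this
      calc θ (s i) = θ (s i) * w * s i * s i * w⁻¹ := by
            rw [mul_assoc (θ (s i) * w), cs.simple_mul_simple_self]
            group
      _ = w * s i * w⁻¹ := by rw [this]
    rw [map_mul, hw, hth, mul_inv_rev, cs.inv_simple]
    group
  · rw [map_mul, map_mul, hinv, hw, mul_inv_rev, mul_inv_rev, cs.inv_simple,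
      theta_simple_inv cs θ]
    group

theorem twMul_twMul (w : W) (i : B) : twMul cs θ (twMul cs θ w i) i = w := by
  unfold twMul
  split_ifs with h h2 h3
  · -- h : branch1, then condition for w * s i
    rw [mul_assoc, cs.simple_mul_simple_self, mul_one]
  · -- h : branch1 but ¬cond2 : contradiction
    exfalso
    apply h2
    calc θ (cs.simple i) * (w * cs.simple i) * cs.simple i
        = (θ (cs.simple i) * w * cs.simple i) * cs.simple i := by group
    _ = w * cs.simple i := by rw [h]
  · -- ¬h, cond2 holds : contradiction
    exfalso
    apply h
    have h4 : θ (cs.simple i) * (θ (cs.simple i) * w * cs.simple i) * cs.simple i = w := by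
      calc θ (cs.simple i) * (θ (cs.simple i) * w * cs.simple i) * cs.simple i
          = (θ (cs.simple i) * θ (cs.simple i)) * w * (cs.simple i * cs.simple i) := by group
      _ = w := by rw [theta_simple_sq cs θ, cs.simple_mul_simple_self]; group
    rw [h4] at h3
    exact h3.symm
  · -- ¬h, ¬cond2 : double twisted conjugation
    calc θ (cs.simple i) * (θ (cs.simple i) * w * cs.simple i) * cs.simple i
        = (θ (cs.simple i) * θ (cs.simple i)) * w * (cs.simple i * cs.simple i) := by group
    _ = w := by rw [theta_simple_sq cs θ, cs.simple_mul_simple_self]; group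

theorem twMul_ne (w : W) (i : B) : twMul cs θ w i ≠ w := by
  unfold twMul
  split_ifs with h
  · intro hc
    have : s i = 1 := by
      calc s i = w⁻¹ * (w * s i) := by group
      _ = w⁻¹ * w := by rw [hc]
      _ = 1 := by group
    exact simple_ne_one cs i this
  · exact h

theorem lmul_theta_length (hinv : ∀ w : W, θ (θ w) = w) (hS : PreservesSimples cs θ)
    {w : W} (hw : θ w = w⁻¹) (i : B) : ℓ (θ (s i) * w) = ℓ (w * s i) := by
  have h1 : θ (θ (s i) * w) = (w * s i)⁻¹ := by
    rw [map_mul, hinv, hw, mul_inv_rev, cs.inv_simple]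
  calc ℓ (θ (s i) * w) = ℓ (θ (θ (s i) * w)) := (theta_length cs θ hinv hS _).symm
  _ = ℓ ((w * s i)⁻¹) := by rw [h1]
  _ = ℓ (w * s i) := cs.length_inv _

/-- The two-descents lemma. -/
theorem two_descents {y : W} {a i : B} (ha : ℓ (s a * y) < ℓ y) (hi : ℓ (y * s i) < ℓ y) :
    s a * y = y * s i ∨ ℓ (s a * y * s i) + 2 = ℓ y := by
  obtain ⟨ω', hred, hyeq, hlen, hprod⟩ := exists_reduced_word_concat cs hi
  have hlt : ℓ (s a * π (ω'.concat i)) < ℓ (π (ω'.concat i)) := by rw [← hyeq]; exact ha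
  obtain ⟨p, hp, hpeq⟩ := left_strong_exchange cs (cs.isReflection_simple a) hlt
  rw [← hyeq] at hpeq
  rw [List.length_concat] at hp
  rcases Nat.lt_or_ge p ω'.length with hplt | hpge
  · right
    have herase : (ω'.concat i).eraseIdx p = (ω'.eraseIdx p).concat i := by
      rw [List.concat_eq_append, List.concat_eq_append, List.eraseIdx_append_of_lt_length hplt]
    rw [herase, cs.wordProd_concat] at hpeq
    have h2 : s a * y * s i = π (ω'.eraseIdx p) := by
      rw [hpeq, mul_assoc, cs.simple_mul_simple_self, mul_one]
    have h3 : ℓ (π (ω'.eraseIdx p)) ≤ (ω'.eraseIdx p).length := cs.length_wordProd_le _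
    have h4 : (ω'.eraseIdx p).length + 1 = ω'.length := List.length_eraseIdx_add_one hplt
    have h5 : ℓ (y * s i) + 1 = ℓ y := by
      rcases cs.length_mul_simple y i with h6 | h6 <;> omega
    have h7 : ℓ (s a * y) + 1 = ℓ y := by
      rcases cs.length_simple_mul y a with h6 | h6 <;> omega
    have h8 : ℓ (s a * y) ≤ ℓ (s a * y * s i) + 1 := by
      have := cs.length_mul_ge_length_sub_length (s a * y) (s i)
      have h9 := cs.length_simple i
      omega
    rw [h2] at h8 ⊢
    omega
  · left
    have hpeq2 : p = ω'.length := by omega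
    have herase : (ω'.concat i).eraseIdx p = ω' := by
      rw [hpeq2, List.concat_eq_append, List.eraseIdx_append_of_length_le (le_refl _)]
      simp
    rw [herase, hprod] at hpeq
    exact hpeq

/-- Lemma C, increasing branch-2 case. -/
theorem lemC_up2 (hinv : ∀ w : W, θ (θ w) = w) (hS : PreservesSimples cs θ)
    {w : W} (hw : θ w = w⁻¹) {i : B} (hup : ℓ w < ℓ (w * s i))
    (hbr : θ (s i) * w * s i ≠ w) : ℓ (θ (s i) * w * s i) = ℓ w + 2 := by
  obtain ⟨a, hai⟩ := hS i
  have hws : ℓ (w * s i) = ℓ w + 1 := by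
    rcases cs.length_mul_simple w i with h6 | h6 <;> omega
  have hcand : ℓ (θ (s i) * w * s i) = ℓ w ∨ ℓ (θ (s i) * w * s i) = ℓ w + 2 := by
    have h1 : θ (s i) * w * s i = s a * (w * s i) := by rw [hai]; group
    rw [h1]
    rcases cs.length_simple_mul (w * s i) a with h6 | h6 <;> omega
  rcases hcand with hc | hc
  · exfalso
    have hdesc1 : ℓ (s a * (w * s i)) < ℓ (w * s i) := by
      have h1 : θ (s i) * w * s i = s a * (w * s i) := by rw [hai]; group
      rw [← h1]
      omega
    have hdesc2 : ℓ ((w * s i) * s i) < ℓ (w * s i) := by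
      rw [mul_assoc, cs.simple_mul_simple_self, mul_one]
      omega
    rcases two_descents cs hdesc1 hdesc2 with h2 | h2
    · apply hbr
      rw [mul_assoc w (s i) (s i), cs.simple_mul_simple_self, mul_one] at h2
      rw [hai]
      calc s a * w * s i = s a * (w * s i) := by group
      _ = w := h2
    · have h3 : s a * (w * s i) * s i = s a * w := by
        calc s a * (w * s i) * s i = s a * w * (s i * s i) := by group
        _ = s a * w := by rw [cs.simple_mul_simple_self, mul_one]
      rw [h3] at h2
      have h4 : ℓ (s a * w) = ℓ (w * s i) := by
        rw [← hai]
        exact lmul_theta_length cs θ hinv hS hw i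
      omega
  · exact hc

/-- Lemma C, decreasing branch-2 case. -/
theorem lemC_down2 (hinv : ∀ w : W, θ (θ w) = w) (hS : PreservesSimples cs θ)
    {w : W} (hw : θ w = w⁻¹) {i : B} (hdn : ℓ (w * s i) < ℓ w)
    (hbr : θ (s i) * w * s i ≠ w) : ℓ (θ (s i) * w * s i) + 2 = ℓ w := by
  obtain ⟨a, hai⟩ := hS i
  have hws : ℓ (w * s i) + 1 = ℓ w := by
    rcases cs.length_mul_simple w i with h6 | h6 <;> omega
  have hlaw : ℓ (θ (s i) * w) = ℓ (w * s i) := lmul_theta_length cs θ hinv hS hw i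
  have hcand : ℓ (θ (s i) * w * s i) = ℓ w ∨ ℓ (θ (s i) * w * s i) + 2 = ℓ w := by
    have h1 : θ (s i) * w * s i = s a * (w * s i) := by rw [hai]; group
    rw [h1]
    rcases cs.length_simple_mul (w * s i) a with h6 | h6 <;> omega
  rcases hcand with hc | hc
  · exfalso
    set y := θ (s i) * w * s i with hy
    have hdesc1 : ℓ (s a * y) < ℓ y := by
      have h1 : s a * y = w * s i := by
        rw [hy, hai]
        calc s a * (s a * w * s i) = (s a * s a) * w * s i := by group
        _ = w * s i := by
            rw [← hai, theta_simple_sq cs θ]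
            group
      rw [h1]
      omega
    have hdesc2 : ℓ (y * s i) < ℓ y := by
      have h1 : y * s i = θ (s i) * w := by
        rw [hy, mul_assoc (θ (s i) * w), cs.simple_mul_simple_self, mul_one]
      rw [h1, hlaw]
      omega
    rcases two_descents cs hdesc1 hdesc2 with h2 | h2
    · apply hbr
      have h3 : s a * y = w * s i := by
        rw [hy, hai]
        calc s a * (s a * w * s i) = (s a * s a) * w * s i := by group
        _ = w * s i := by
            rw [← hai, theta_simple_sq cs θ]
            group
      have h4 : y * s i = θ (s i) * w := by
        rw [hy, mul_assoc (θ (s i) * w), cs.simple_mul_simple_self, mul_one]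
      rw [h3, h4] at h2
      -- h2 : w * s i = θ (s i) * w
      calc θ (s i) * w * s i = (w * s i) * s i := by rw [← h2]
      _ = w := by rw [mul_assoc, cs.simple_mul_simple_self, mul_one]
    · have h3 : s a * y * s i = w := by
        rw [hy, hai]
        calc s a * (s a * w * s i) * s i = (s a * s a) * w * (s i * s i) := by group
        _ = w := by
            rw [← hai, theta_simple_sq cs θ, cs.simple_mul_simple_self]
            group
      rw [h3] at h2
      omega
  · exact hc

end Twisted


/-! ### Part IV: the exchange property for twisted involutions -/

section Main

variable (θ : W ≃* W)

theorem twWord_append (w : W) (l l' : List B) :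
    twWord cs θ w (l ++ l') = twWord cs θ (twWord cs θ w l) l' := by
  unfold twWord
  exact List.foldl_append

theorem twWord_concat (w : W) (l : List B) (i : B) :
    twWord cs θ w (l.concat i) = twMul cs θ (twWord cs θ w l) i := by
  rw [List.concat_eq_append, twWord_append]
  rfl

theorem twWord_ti (hinv : ∀ w : W, θ (θ w) = w) (l : List B) :
    θ (twWord cs θ 1 l) = (twWord cs θ 1 l)⁻¹ := by
  suffices h : ∀ (l : List B) (w : W), θ w = w⁻¹ → θ (twWord cs θ w l) = (twWord cs θ w l)⁻¹ by
    exact h l 1 (by rw [map_one, inv_one])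
  intro l
  induction l with
  | nil => intro w hw; exact hw
  | cons a l ih =>
    intro w hw
    show θ (twWord cs θ (twMul cs θ w a) l) = (twWord cs θ (twMul cs θ w a) l)⁻¹
    exact ih _ (twMul_ti cs θ hinv hw a)

theorem twRho_le {w : W} (l : List B) (h : twWord cs θ 1 l = w) :
    twRho cs θ w ≤ l.length :=
  Nat.sInf_le ⟨l, rfl, h⟩

theorem exists_twRho_word {w : W} (h : ∃ l, twWord cs θ 1 l = w) :
    ∃ l : List B, l.length = twRho cs θ w ∧ twWord cs θ 1 l = w := by
  have hne : {k : ℕ | ∃ l : List B, l.length = k ∧ twWord cs θ 1 l = w}.Nonempty := by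
    obtain ⟨l, hl⟩ := h
    exact ⟨l.length, l, rfl, hl⟩
  exact Nat.sInf_mem hne

theorem twRho_one : twRho cs θ 1 = 0 :=
  Nat.le_zero.mp (twRho_le cs θ [] rfl)

/-- The statement of the exchange property at level `k`. -/
def Ap (k : ℕ) : Prop := ∀ l : List B, l.length = k → twRho cs θ (twWord cs θ 1 l) = k →
  ∀ i : B, ℓ ((twWord cs θ 1 l) * s i) < ℓ (twWord cs θ 1 l) →
  ∃ j < k, twMul cs θ (twWord cs θ 1 l) i = twWord cs θ 1 (l.eraseIdx j)

/-- The statement of the subword property at level `k`. -/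
def SWp (k : ℕ) : Prop := ∀ l : List B, l.length = k → twRho cs θ (twWord cs θ 1 l) = k →
  ∀ v : W, θ v = v⁻¹ → ble cs v (twWord cs θ 1 l) →
  ∃ μ : List B, μ.Sublist l ∧ twWord cs θ 1 μ = v ∧ μ.length = twRho cs θ v

theorem twMul_length_cases (hinv : ∀ w : W, θ (θ w) = w) (hS : PreservesSimples cs θ)
    {x : W} (hxti : θ x = x⁻¹) (i : B) (hasc : ℓ x < ℓ (x * s i)) :
    ℓ x < ℓ (twMul cs θ x i) ∧ ℓ ((twMul cs θ x i) * s i) < ℓ (twMul cs θ x i) := by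
  have hxs : ℓ (x * s i) = ℓ x + 1 := by
    rcases cs.length_mul_simple x i with h | h <;> omega
  unfold twMul
  split_ifs with h
  · constructor
    · omega
    · rw [mul_assoc, cs.simple_mul_simple_self, mul_one]
      omega
  · have h2 : ℓ (θ (cs.simple i) * x * cs.simple i) = ℓ x + 2 :=
      lemC_up2 cs θ hinv hS hxti hasc h
    constructor
    · omega
    · have h3 : θ (cs.simple i) * x * cs.simple i * cs.simple i = θ (cs.simple i) * x := by
        rw [mul_assoc (θ (cs.simple i) * x), cs.simple_mul_simple_self, mul_one]
      rw [h3, lmul_theta_length cs θ hinv hS hxti i]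
      omega

/-- If `ℓ` goes up but `ρ` does not, we get a contradiction. -/
theorem rho_drop_aux (hinv : ∀ w : W, θ (θ w) = w) (hS : PreservesSimples cs θ)
    {x : W} {i : B} (hxti : θ x = x⁻¹) (hxreach : ∃ l, twWord cs θ 1 l = x)
    (hasc : ℓ x < ℓ (x * s i))
    (hA : Ap cs θ (twRho cs θ (twMul cs θ x i))) :
    twRho cs θ x < twRho cs θ (twMul cs θ x i) := by
  set y := twMul cs θ x i with hy
  have hyreach : ∃ l, twWord cs θ 1 l = y := by
    obtain ⟨l, hl⟩ := hxreach
    exact ⟨l.concat i, by rw [twWord_concat, hl]⟩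
  obtain ⟨th, hthlen, hth⟩ := exists_twRho_word cs θ hyreach
  have hydesc : ℓ (y * s i) < ℓ y := (twMul_length_cases cs θ hinv hS hxti i hasc).2
  have hA2 := hA th hthlen (by rw [hth]) i (by rw [hth]; exact hydesc)
  obtain ⟨j, hj, hjeq⟩ := hA2
  rw [hth] at hjeq
  have hyx : twMul cs θ y i = x := twMul_twMul cs θ x i
  rw [hyx] at hjeq
  have hxle : twRho cs θ x ≤ (th.eraseIdx j).length := twRho_le cs θ _ hjeq.symm
  have hlen2 : (th.eraseIdx j).length + 1 = th.length :=
    List.length_eraseIdx_add_one (by omega)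
  omega

theorem sublist_eraseIdx {α : Type*} : ∀ {μ l : List α}, μ.Sublist l →
    μ.length + 1 = l.length → ∃ j < l.length, μ = l.eraseIdx j := by
  intro μ l h
  induction h with
  | slnil => intro h; simp at h
  | @cons l₁ l₂ a hsub ih =>
    intro hlen
    simp only [List.length_cons] at hlen
    have heq : l₁ = l₂ := hsub.eq_of_length (by omega)
    exact ⟨0, by simp, by simp [heq]⟩
  | @cons_cons l₁ l₂ a hsub ih =>
    intro hlen
    simp only [List.length_cons] at hlen
    obtain ⟨j, hj, hjeq⟩ := ih (by omega)
    refine ⟨j + 1, by simp; omega, ?_⟩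
    rw [List.eraseIdx_cons_succ, hjeq]

/-- The master induction: subword property and exchange property. -/
theorem master (hinv : ∀ w : W, θ (θ w) = w) (hS : PreservesSimples cs θ) :
    ∀ k, SWp cs θ k ∧ Ap cs θ k := by
  intro k
  induction k using Nat.strong_induction_on with
  | _ k IH =>
  have hSW : SWp cs θ k := by
    intro l hlen hred v hvti hvle
    rcases Nat.eq_zero_or_pos k with hk0 | hkpos
    · -- base case
      subst hk0
      have hl : l = [] := List.length_eq_zero_iff.mp hlen
      subst hl
      have hw1 : twWord cs θ 1 ([] : List B) = 1 := rfl
      rw [hw1] at hvle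
      have hv1 : v = 1 := by
        have h1 := length_le_of_ble cs hvle
        rw [cs.length_one] at h1
        exact cs.length_eq_zero_iff.mp (Nat.le_zero.mp h1)
      exact ⟨[], List.nil_sublist _, by rw [hv1]; rfl, by simp [hv1, twRho_one]⟩
    · -- inductive case
      have hlne : l ≠ [] := by
        intro h
        rw [h] at hlen
        simp at hlen
        omega
      obtain ⟨m1, t, hl⟩ : ∃ (m1 : List B) (t : B), l = m1.concat t := by
        refine ⟨l.dropLast, l.getLast hlne, ?_⟩
        rw [List.concat_eq_append, List.dropLast_append_getLast hlne]
      subst hl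
      rw [List.length_concat] at hlen
      have hm1len : m1.length = k - 1 := by omega
      obtain ⟨u, hu⟩ : ∃ u : W, u = twWord cs θ 1 m1 := ⟨_, rfl⟩
      have hw : twWord cs θ 1 (m1.concat t) = twMul cs θ u t := by
        rw [twWord_concat, hu]
      rw [hw] at hvle hred
      have huti : θ u = u⁻¹ := by rw [hu]; exact twWord_ti cs θ hinv m1
      have hured : twRho cs θ u = k - 1 := by
        have hle : twRho cs θ u ≤ k - 1 := by
          have h0 := twRho_le cs θ m1 hu.symm
          omega
        rcases Nat.lt_or_ge (twRho cs θ u) (k - 1) with h2 | h2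
        · exfalso
          obtain ⟨th, hthlen, hth⟩ := exists_twRho_word cs θ ⟨m1, hu.symm⟩
          have h3 : twWord cs θ 1 (th.concat t) = twMul cs θ u t := by
            rw [twWord_concat, hth]
          have h4 := twRho_le cs θ _ h3
          rw [List.length_concat] at h4
          rw [hred] at h4
          omega
        · omega
      have hmred : twRho cs θ (twWord cs θ 1 m1) = k - 1 := by
        rw [← hu]; exact hured
      have hut_asc : ℓ u < ℓ (u * s t) := by
        rcases Nat.lt_or_ge (ℓ (u * s t)) (ℓ u) with h1 | h1
        · exfalso
          have hA' := (IH (k - 1) (by omega)).2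
          obtain ⟨j, hj, hjeq⟩ := hA' m1 hm1len hmred t
            (by rw [← hu]; exact h1)
          rw [← hu] at hjeq
          have h2 : twRho cs θ (twMul cs θ u t) ≤ (m1.eraseIdx j).length := by
            rw [hjeq]
            exact twRho_le cs θ _ rfl
          have h3 : (m1.eraseIdx j).length + 1 = m1.length :=
            List.length_eraseIdx_add_one (by omega)
          omega
        · have := cs.length_mul_simple_ne u t
          omega
      have hust : ℓ (u * s t) = ℓ u + 1 := by
        rcases cs.length_mul_simple u t with h | h <;> omega
      -- the common continuation
      have hcont : ℓ (v * s t) < ℓ v → ble cs (twMul cs θ v t) u →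
          ∃ μ : List B, μ.Sublist (m1.concat t) ∧ twWord cs θ 1 μ = v ∧
            μ.length = twRho cs θ v := by
        intro hvt_lt hx_le
        obtain ⟨x, hx⟩ : ∃ x : W, x = twMul cs θ v t := ⟨_, rfl⟩
        rw [← hx] at hx_le
        have hxti : θ x = x⁻¹ := by rw [hx]; exact twMul_ti cs θ hinv hvti t
        obtain ⟨mu1, hmu1sub, hmu1eq, hmu1len⟩ :=
          (IH (k - 1) (by omega)).1 m1 hm1len hmred x hxti (by rw [← hu]; exact hx_le)
        have hxv : twMul cs θ x t = v := by
          rw [hx]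
          exact twMul_twMul cs θ v t
        have hmulen : mu1.length + 1 = twRho cs θ v := by
          have hle : twRho cs θ v ≤ mu1.length + 1 := by
            have h0 : twWord cs θ 1 (mu1.concat t) = v := by
              rw [twWord_concat, hmu1eq, hxv]
            have := twRho_le cs θ _ h0
            rw [List.length_concat] at this
            omega
          rcases Nat.lt_or_ge (twRho cs θ v) (mu1.length + 1) with h1 | h1
          · exfalso
            obtain ⟨th, hthlen, hth⟩ := exists_twRho_word cs θ ⟨mu1.concat t, by
              rw [twWord_concat, hmu1eq, hxv]⟩
            have hm : th.length < k := by
              have h5 : mu1.length ≤ m1.length := hmu1sub.length_le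
              omega
            have hA' := (IH th.length hm).2
            obtain ⟨j, hj, hjeq⟩ := hA' th rfl (by rw [hth, hthlen]) t
              (by rw [hth]; exact hvt_lt)
            rw [hth, ← hx] at hjeq
            have h2 : twRho cs θ x ≤ (th.eraseIdx j).length := twRho_le cs θ _ hjeq.symm
            have h3 : (th.eraseIdx j).length + 1 = th.length :=
              List.length_eraseIdx_add_one (by omega)
            omega
          · omega
        refine ⟨mu1.concat t, ?_, ?_, ?_⟩
        · rw [List.concat_eq_append, List.concat_eq_append]
          exact hmu1sub.append_right [t]
        · rw [twWord_concat, hmu1eq, hxv]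
        · rw [List.length_concat, hmulen]
      -- direct case : v ≤ u
      have hdirect : ble cs v u →
          ∃ μ : List B, μ.Sublist (m1.concat t) ∧ twWord cs θ 1 μ = v ∧
            μ.length = twRho cs θ v := by
        intro hvu
        obtain ⟨μ, hμsub, hμeq, hμlen⟩ :=
          (IH (k - 1) (by omega)).1 m1 hm1len hmred v hvti (by rw [← hu]; exact hvu)
        refine ⟨μ, ?_, hμeq, hμlen⟩
        rw [List.concat_eq_append]
        exact hμsub.trans (List.sublist_append_left m1 [t])
      -- branch on the last twisted multiplication
      by_cases hbr : θ (s t) * u * s t = u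
      · -- Case 1 : twMul u t = u * s t
        have hw1 : twMul cs θ u t = u * s t := by
          unfold twMul
          rw [if_pos hbr]
        rw [hw1] at hvle
        have hwt_desc : ℓ ((u * s t) * s t) < ℓ (u * s t) := by
          rw [mul_assoc, cs.simple_mul_simple_self, mul_one]
          omega
        have hustt : (u * s t) * s t = u := by
          rw [mul_assoc, cs.simple_mul_simple_self, mul_one]
        rcases lift_right cs hvle hwt_desc with hvu | ⟨hvs_lt, hvs_le⟩
        · rw [hustt] at hvu
          exact hdirect hvu
        · rw [hustt] at hvs_le
          apply hcont hvs_lt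
          by_cases hvb : θ (s t) * v * s t = v
          · have h0 : twMul cs θ v t = v * s t := by
              unfold twMul
              rw [if_pos hvb]
            rw [h0]
            exact hvs_le
          · have hxeq : twMul cs θ v t = θ (s t) * v * s t := by
              unfold twMul
              rw [if_neg hvb]
            rw [hxeq]
            have hlen2 : ℓ (θ (s t) * v * s t) + 2 = ℓ v :=
              lemC_down2 cs θ hinv hS hvti hvs_lt hvb
            have hvst : ℓ (v * s t) + 1 = ℓ v := by
              rcases cs.length_mul_simple v t with h | h <;> omega
            obtain ⟨a, ha⟩ := hS t
            have hstep : ble cs (θ (s t) * v * s t) (v * s t) := by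
              have h1 : θ (s t) * v * s t = θ (s t) * (v * s t) := by group
              rw [h1]
              refine ble_of_lmul_reflection cs ?_ ?_
              · rw [ha]
                exact cs.isReflection_simple a
              · rw [← h1]
                omega
            exact ble_trans cs hstep hvs_le
      · -- Case 2 : twMul u t = θ (s t) * u * s t
        have hw2 : twMul cs θ u t = θ (s t) * u * s t := by
          unfold twMul
          rw [if_neg hbr]
        rw [hw2] at hvle
        have hwlen : ℓ (θ (s t) * u * s t) = ℓ u + 2 :=
          lemC_up2 cs θ hinv hS huti hut_asc hbr
        obtain ⟨a, ha⟩ := hS t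
        have hsaw : s a * (θ (s t) * u * s t) = u * s t := by
          rw [← ha]
          calc θ (s t) * (θ (s t) * u * s t) = (θ (s t) * θ (s t)) * u * s t := by group
          _ = u * s t := by rw [theta_simple_sq cs θ]; group
        have hlw_desc : ℓ (s a * (θ (s t) * u * s t)) < ℓ (θ (s t) * u * s t) := by
          rw [hsaw]
          omega
        have hust_desc : ℓ ((u * s t) * s t) < ℓ (u * s t) := by
          rw [mul_assoc, cs.simple_mul_simple_self, mul_one]
          omega
        have hustt : (u * s t) * s t = u := by
          rw [mul_assoc, cs.simple_mul_simple_self, mul_one]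
        rcases lift_left cs hvle hlw_desc with hvust | ⟨hbv_lt, hbv_le⟩
        · -- v ≤ u * s t
          rw [hsaw] at hvust
          rcases lift_right cs hvust hust_desc with hvu | ⟨hvs_lt, hvs_le⟩
          · rw [hustt] at hvu
            exact hdirect hvu
          · rw [hustt] at hvs_le
            apply hcont hvs_lt
            by_cases hvb : θ (s t) * v * s t = v
            · have h0 : twMul cs θ v t = v * s t := by
                unfold twMul
                rw [if_pos hvb]
              rw [h0]
              exact hvs_le
            · have hxeq : twMul cs θ v t = θ (s t) * v * s t := by
                unfold twMul
                rw [if_neg hvb]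
              rw [hxeq]
              have hlen2 : ℓ (θ (s t) * v * s t) + 2 = ℓ v :=
                lemC_down2 cs θ hinv hS hvti hvs_lt hvb
              have hvst : ℓ (v * s t) + 1 = ℓ v := by
                rcases cs.length_mul_simple v t with h | h <;> omega
              have hstep : ble cs (θ (s t) * v * s t) (v * s t) := by
                have h1 : θ (s t) * v * s t = θ (s t) * (v * s t) := by group
                rw [h1]
                refine ble_of_lmul_reflection cs ?_ ?_
                · rw [ha]
                  exact cs.isReflection_simple a
                · rw [← h1]
                  omega
              exact ble_trans cs hstep hvs_le
        · -- s a * v ≤ u * s t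
          rw [hsaw] at hbv_le
          have hvt_len : ℓ (v * s t) = ℓ (s a * v) := by
            rw [← ha]
            exact (lmul_theta_length cs θ hinv hS hvti t).symm
          have hvt_lt : ℓ (v * s t) < ℓ v := by
            rw [hvt_len]
            exact hbv_lt
          have hvst : ℓ (v * s t) + 1 = ℓ v := by
            rcases cs.length_mul_simple v t with h | h <;> omega
          rcases lift_right cs hbv_le hust_desc with hbvu | ⟨hbvs_lt, hbvs_le⟩
          · -- s a * v ≤ u
            rw [hustt] at hbvu
            apply hcont hvt_lt
            by_cases hvb : θ (s t) * v * s t = v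
            · have hx1 : twMul cs θ v t = v * s t := by
                unfold twMul
                rw [if_pos hvb]
              have hx2 : v * s t = s a * v := by
                rw [← ha]
                calc v * s t = (θ (s t) * θ (s t)) * v * s t := by
                      rw [theta_simple_sq cs θ]; group
                _ = θ (s t) * (θ (s t) * v * s t) := by group
                _ = θ (s t) * v := by rw [hvb]
              rw [hx1, hx2]
              exact hbvu
            · have hxeq : twMul cs θ v t = θ (s t) * v * s t := by
                unfold twMul
                rw [if_neg hvb]
              rw [hxeq]
              have hlen2 : ℓ (θ (s t) * v * s t) + 2 = ℓ v :=
                lemC_down2 cs θ hinv hS hvti hvt_lt hvb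
              have hsavst : θ (s t) * v * s t = (s a * v) * s t := by
                rw [← ha]
              have hstep : ble cs (θ (s t) * v * s t) (s a * v) := by
                rw [hsavst]
                refine ble_of_mul_reflection cs (cs.isReflection_simple t) ?_
                rw [← hsavst]
                omega
              exact ble_trans cs hstep hbvu
          · -- (s a * v) * s t ≤ u
            rw [hustt] at hbvs_le
            by_cases hvb : θ (s t) * v * s t = v
            · -- then (s a * v) * s t = v
              have hx2 : v * s t = s a * v := by
                rw [← ha]
                calc v * s t = (θ (s t) * θ (s t)) * v * s t := by
                      rw [theta_simple_sq cs θ]; group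
                _ = θ (s t) * (θ (s t) * v * s t) := by group
                _ = θ (s t) * v := by rw [hvb]
              have hx3 : (s a * v) * s t = v := by
                rw [← hx2, mul_assoc, cs.simple_mul_simple_self, mul_one]
              rw [hx3] at hbvs_le
              exact hdirect hbvs_le
            · apply hcont hvt_lt
              have hxeq : twMul cs θ v t = θ (s t) * v * s t := by
                unfold twMul
                rw [if_neg hvb]
              have hsavst : θ (s t) * v * s t = (s a * v) * s t := by
                rw [← ha]
              rw [hxeq, hsavst]
              exact hbvs_le
  have hAp : Ap cs θ k := by
    intro l hlen hred i hdesc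
    obtain ⟨w, hwd⟩ : ∃ w : W, w = twWord cs θ 1 l := ⟨_, rfl⟩
    rw [← hwd] at hred hdesc ⊢
    have hwti : θ w = w⁻¹ := by rw [hwd]; exact twWord_ti cs θ hinv l
    obtain ⟨y, hy⟩ : ∃ y : W, y = twMul cs θ w i := ⟨_, rfl⟩
    rw [← hy]
    have hyti : θ y = y⁻¹ := by rw [hy]; exact twMul_ti cs θ hinv hwti i
    have hwst : ℓ (w * s i) + 1 = ℓ w := by
      rcases cs.length_mul_simple w i with h | h <;> omega
    have hyle : ble cs y w := by
      by_cases hbr : θ (s i) * w * s i = w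
      · have h0 : y = w * s i := by rw [hy]; unfold twMul; rw [if_pos hbr]
        rw [h0]
        exact ble_of_mul_reflection cs (cs.isReflection_simple i) hdesc
      · have hyeq : y = θ (s i) * w * s i := by rw [hy]; unfold twMul; rw [if_neg hbr]
        have hlen2 : ℓ (θ (s i) * w * s i) + 2 = ℓ w :=
          lemC_down2 cs θ hinv hS hwti hdesc hbr
        obtain ⟨a, ha⟩ := hS i
        have hstep : ble cs y (w * s i) := by
          rw [hyeq]
          have h1 : θ (s i) * w * s i = θ (s i) * (w * s i) := by group
          rw [h1]
          refine ble_of_lmul_reflection cs ?_ ?_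
          · rw [ha]
            exact cs.isReflection_simple a
          · rw [← h1]
            omega
        exact ble_trans cs hstep
          (ble_of_mul_reflection cs (cs.isReflection_simple i) hdesc)
    obtain ⟨μ, hμsub, hμeq, hμlen⟩ := hSW l hlen (by rw [← hwd]; exact hred) y hyti
      (by rw [← hwd]; exact hyle)
    have hμlt : μ.length + 1 = k := by
      have h1 : μ.length ≤ k := by
        have := hμsub.length_le
        omega
      have h2 : μ.length ≠ k := by
        intro h
        have h3 : μ = l := hμsub.eq_of_length (by omega)
        rw [h3, ← hwd] at hμeq
        exact twMul_ne cs θ w i (by rw [← hy, hμeq])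
      have h3 : k ≤ μ.length + 1 := by
        have h4 : twWord cs θ 1 (μ.concat i) = w := by
          rw [twWord_concat, hμeq, hy, twMul_twMul]
        have h5 := twRho_le cs θ _ h4
        rw [List.length_concat] at h5
        omega
      omega
    obtain ⟨j, hj, hjeq⟩ := sublist_eraseIdx hμsub (by omega)
    refine ⟨j, by omega, ?_⟩
    rw [← hjeq]
    exact hμeq.symm
  exact ⟨hSW, hAp⟩

end Main

end StmtAux

/-- Exchange property for `I(θ)` (Proposition 3.7). -/
theorem stmt_8 {B W : Type*} [Group W] {M : CoxeterMatrix B}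
    (cs : CoxeterSystem M W) (θ : W ≃* W)
    (hinv : ∀ w : W, θ (θ w) = w) (hS : PreservesSimples cs θ)
    (l : List B) (hred : twRho cs θ (twWord cs θ 1 l) = l.length)
    (i : B) (h : twRho cs θ (twWord cs θ 1 (l ++ [i])) < l.length) :
    ∃ j < l.length, twWord cs θ 1 (l ++ [i]) = twWord cs θ 1 (l.eraseIdx j) := by
  have happ : twWord cs θ 1 (l ++ [i]) = twMul cs θ (twWord cs θ 1 l) i := by
    rw [← List.concat_eq_append]
    exact StmtAux.twWord_concat cs θ 1 l i
  rw [happ] at h ⊢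
  obtain ⟨w, hwd⟩ : ∃ w : W, w = twWord cs θ 1 l := ⟨_, rfl⟩
  have hwti : θ w = w⁻¹ := by rw [hwd]; exact StmtAux.twWord_ti cs θ hinv l
  have hdesc : cs.length (w * cs.simple i) < cs.length w := by
    by_contra hnot
    have hne := cs.length_mul_simple_ne w i
    have hasc : cs.length w < cs.length (w * cs.simple i) := by omega
    have hdrop := StmtAux.rho_drop_aux cs θ hinv hS hwti ⟨l, hwd.symm⟩ hasc
      ((StmtAux.master cs θ hinv hS (twRho cs θ (twMul cs θ w i))).2)
    rw [← hwd] at h hred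
    omega
  have hAp := (StmtAux.master cs θ hinv hS l.length).2
  exact hAp l rfl hred i (by rw [← hwd]; exact hdesc)
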